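/- Let (G, ψ, p) be a generic Γ-labeled framework in ℝ², where Γ is free abelian of rank k ≥ 1, and V(G) = {u, v} has exactly two vertices with all edges directed from u to v. If k = 1 and there exist two edges from u to v with distinct labels, then (G, ψ, p) is L-periodically globally rigid for any nonsingular homomorphism L : Γ → ℝ²: for every q : V → ℝ² satisfying ‖q(u) − (q(v) + L(ψ(e)))‖ = ‖p(u) − (p(v) + L(ψ(e)))‖ for all edges e, one has ‖q(u) − (q(v) + L(γ))‖ = ‖p(u) − (p(v) + L(γ))‖ for all γ ∈ Γ. -/

import Mathlib

private lemma key_two_point {E : Type*} [NormedAddCommGroup E] [InnerProductSpace ℝ E]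
    (x y v : E) (a b : ℝ) (hab : a ≠ b)
    (h1 : ‖x - a • v‖ = ‖y - a • v‖) (h2 : ‖x - b • v‖ = ‖y - b • v‖) (c : ℝ) :
    ‖x - c • v‖ = ‖y - c • v‖ := by
  have expand : ∀ (z : E) (t : ℝ), ‖z - t • v‖ ^ 2
      = ‖z‖ ^ 2 - 2 * (t * inner ℝ z v) + t ^ 2 * ‖v‖ ^ 2 := by
    intro z t
    rw [norm_sub_sq_real, real_inner_smul_right, norm_smul, Real.norm_eq_abs, mul_pow, sq_abs]
  have e1 : ‖x - a • v‖ ^ 2 = ‖y - a • v‖ ^ 2 := by rw [h1]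
  have e2 : ‖x - b • v‖ ^ 2 = ‖y - b • v‖ ^ 2 := by rw [h2]
  rw [expand, expand] at e1 e2
  have hPQ : (inner ℝ x v : ℝ) = inner ℝ y v := by
    have h3 : (a - b) * (inner ℝ x v : ℝ) = (a - b) * (inner ℝ y v : ℝ) := by nlinarith
    exact mul_left_cancel₀ (sub_ne_zero.mpr hab) h3
  have hXY : ‖x‖ ^ 2 = ‖y‖ ^ 2 := by rw [hPQ] at e1; linarith
  have ec : ‖x - c • v‖ ^ 2 = ‖y - c • v‖ ^ 2 := by
    rw [expand, expand, hPQ, hXY]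
  have := congrArg Real.sqrt ec
  rwa [Real.sqrt_sq (norm_nonneg _), Real.sqrt_sq (norm_nonneg _)] at this

/-- Lemma rem:2orbits, case `k = 1`, two vertex orbits.
Let `(G, ψ, p)` be a generic `Γ`-labeled framework in `ℝ²` with `Γ ≅ ℤ` (rank one),
two vertices `u = true`, `v = false`, all edges directed from `u` to `v`, and
`L : ℤ → ℝ²` a nonsingular (rational-valued) homomorphism. If two edges carry distinct
labels, then `(G, ψ, p)` is `L`-periodically globally rigid: any `q` with the same
edge lengths has the same complete labeled distance data as `p`. -/
theorem two_orbit_rank_one_globally_rigid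
    {ε : Type*} (ψ : ε → ℤ)
    (L : ℤ →+ EuclideanSpace ℝ (Fin 2))
    (hLns : L 1 ≠ 0)
    (hLrat : ∀ i : Fin 2, ∃ a : ℚ, L 1 i = (a : ℝ))
    (p : Bool → EuclideanSpace ℝ (Fin 2))
    (hgen : AlgebraicIndependent ℚ (fun x : Bool × Fin 2 => p x.1 x.2))
    (e₁ e₂ : ε) (hlabels : ψ e₁ ≠ ψ e₂) :
    ∀ q : Bool → EuclideanSpace ℝ (Fin 2),
      (∀ e : ε, ‖q true - (q false + L (ψ e))‖ = ‖p true - (p false + L (ψ e))‖) →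
      ∀ w w' : Bool, ∀ γ : ℤ,
        ‖q w - (q w' + L γ)‖ = ‖p w - (p w' + L γ)‖ := by
  intro q hq w w' γ
  set v := L 1 with hv
  have hL : ∀ n : ℤ, L n = (n : ℝ) • v := by
    intro n
    have h1 : L n = n • v := by
      rw [hv, ← map_zsmul L n 1]
      norm_num
    rw [h1, ← Int.cast_smul_eq_zsmul ℝ]
  have key' : ∀ γ : ℤ, ‖(q true - q false) - (γ : ℝ) • v‖
      = ‖(p true - p false) - (γ : ℝ) • v‖ := by
    intro γ
    have h1 := hq e₁
    have h2 := hq e₂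
    rw [hL] at h1 h2
    have h1' : ‖(q true - q false) - ((ψ e₁ : ℝ)) • v‖
        = ‖(p true - p false) - ((ψ e₁ : ℝ)) • v‖ := by
      convert h1 using 2 <;> abel
    have h2' : ‖(q true - q false) - ((ψ e₂ : ℝ)) • v‖
        = ‖(p true - p false) - ((ψ e₂ : ℝ)) • v‖ := by
      convert h2 using 2 <;> abel
    have hab : (ψ e₁ : ℝ) ≠ (ψ e₂ : ℝ) := by exact_mod_cast hlabels
    exact key_two_point _ _ _ _ _ hab h1' h2' _
  cases w <;> cases w'
  · -- false false
    have h1 : q false - (q false + L γ) = -(L γ) := by abel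
    have h2 : p false - (p false + L γ) = -(L γ) := by abel
    rw [h1, h2]
  · -- false true
    have h1 : q false - (q true + L γ) = -((q true - q false) - ((-γ : ℤ) : ℝ) • v) := by
      rw [hL]; push_cast; rw [neg_smul]; abel
    have h2 : p false - (p true + L γ) = -((p true - p false) - ((-γ : ℤ) : ℝ) • v) := by
      rw [hL]; push_cast; rw [neg_smul]; abel
    rw [h1, h2, norm_neg, norm_neg]
    exact key' (-γ)
  · -- true false
    have h1 : q true - (q false + L γ) = (q true - q false) - (γ : ℝ) • v := by
      rw [hL]; abel
    have h2 : p true - (p false + L γ) = (p true - p false) - (γ : ℝ) • v := by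
      rw [hL]; abel
    rw [h1, h2]
    exact key' γ
  · -- true true
    have h1 : q true - (q true + L γ) = -(L γ) := by abel
    have h2 : p true - (p true + L γ) = -(L γ) := by abel
    rw [h1, h2]
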